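/- Let k be a field, g a finite-dimensional Lie algebra over k, h ⊆ g a Lie subalgebra, m ⊆ g a linear subspace with g = h ⊕ m, projections P_h, P_m, and set ρ(x)u = P_m[x,u], φ(x,u) = P_h[x,u] for x ∈ h, u ∈ m, and θ_h(u,v) = P_h[u,v], θ_m(u,v) = P_m[u,v] for u,v ∈ m. Then Qφ = dθ_h: for all x ∈ h and u₁, u₂ ∈ m, φ(φ(x,u₁), u₂) − φ(φ(x,u₂), u₁) − φ(x, θ_m(u₁,u₂)) = [x, θ_h(u₁,u₂)] − θ_h(ρ(x)u₁, u₂) − θ_h(u₁, ρ(x)u₂). -/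
import Mathlib


/-- part (2) of the main Theorem: With `φ(x,u) = P_h⁅x,u⁆`,
`ρ(x)u = P_m⁅x,u⁆`, `θ_h(u,v) = P_h⁅u,v⁆`, `θ_m(u,v) = P_m⁅u,v⁆`, one has `Qφ = dθ_h`:
`φ(φ(x,u₁),u₂) − φ(φ(x,u₂),u₁) − φ(x,θ_m(u₁,u₂))
   = [x, θ_h(u₁,u₂)] − θ_h(ρ(x)u₁,u₂) − θ_h(u₁,ρ(x)u₂)`. -/
theorem Q_phi_eq_d_theta_h
    {k : Type*} [Field k] {g : Type*} [LieRing g] [LieAlgebra k g]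
    [FiniteDimensional k g]
    (h : LieSubalgebra k g) (m : Submodule k g)
    (hc : IsCompl h.toSubmodule m)
    (Ph : g →ₗ[k] h.toSubmodule) (Pm : g →ₗ[k] m)
    (hsum : ∀ z : g, (Ph z : g) + (Pm z : g) = z) :
    ∀ (x : h) (u₁ u₂ : m),
      (Ph ⁅(Ph ⁅(x : g), (u₁ : g)⁆ : g), (u₂ : g)⁆ : g)
          - (Ph ⁅(Ph ⁅(x : g), (u₂ : g)⁆ : g), (u₁ : g)⁆ : g)
          - (Ph ⁅(x : g), (Pm ⁅(u₁ : g), (u₂ : g)⁆ : g)⁆ : g)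
        = ⁅(x : g), (Ph ⁅(u₁ : g), (u₂ : g)⁆ : g)⁆
          - (Ph ⁅(Pm ⁅(x : g), (u₁ : g)⁆ : g), (u₂ : g)⁆ : g)
          - (Ph ⁅(u₁ : g), (Pm ⁅(x : g), (u₂ : g)⁆ : g)⁆ : g) := by
  -- `Ph` restricts to the identity on `h`.
  have hPh : ∀ z : g, z ∈ h → (Ph z : g) = z := by
    intro z hz
    have hm : z - (Ph z : g) ∈ m := by
      have h1 : (Pm z : g) = z - (Ph z : g) := eq_sub_of_add_eq' (hsum z)
      rw [← h1]; exact (Pm z).2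
    have hh : z - (Ph z : g) ∈ h.toSubmodule := sub_mem hz (Ph z).2
    have h0 : z - (Ph z : g) = 0 :=
      (Submodule.disjoint_def.mp hc.disjoint) _ hh hm
    exact (sub_eq_zero.mp h0).symm
  intro x u₁ u₂
  -- expand each term containing an inner projection
  have e1 : (Ph ⁅(Ph ⁅(x : g), (u₁ : g)⁆ : g), (u₂ : g)⁆ : g)
      = (Ph ⁅⁅(x : g), (u₁ : g)⁆, (u₂ : g)⁆ : g)
        - (Ph ⁅(Pm ⁅(x : g), (u₁ : g)⁆ : g), (u₂ : g)⁆ : g) := by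
    rw [eq_sub_of_add_eq (hsum ⁅(x : g), (u₁ : g)⁆), sub_lie, map_sub, Submodule.coe_sub]
  have e2 : (Ph ⁅(Ph ⁅(x : g), (u₂ : g)⁆ : g), (u₁ : g)⁆ : g)
      = (Ph ⁅⁅(x : g), (u₂ : g)⁆, (u₁ : g)⁆ : g)
        - (Ph ⁅(Pm ⁅(x : g), (u₂ : g)⁆ : g), (u₁ : g)⁆ : g) := by
    rw [eq_sub_of_add_eq (hsum ⁅(x : g), (u₂ : g)⁆), sub_lie, map_sub, Submodule.coe_sub]
  have e3 : (Ph ⁅(x : g), (Pm ⁅(u₁ : g), (u₂ : g)⁆ : g)⁆ : g)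
      = (Ph ⁅(x : g), ⁅(u₁ : g), (u₂ : g)⁆⁆ : g)
        - ⁅(x : g), (Ph ⁅(u₁ : g), (u₂ : g)⁆ : g)⁆ := by
    rw [eq_sub_of_add_eq' (hsum ⁅(u₁ : g), (u₂ : g)⁆), lie_sub, map_sub, Submodule.coe_sub]
    congr 1
    exact hPh _ (h.lie_mem x.2 (Ph ⁅(u₁ : g), (u₂ : g)⁆).2)
  have e4 : (Ph ⁅(u₁ : g), (Pm ⁅(x : g), (u₂ : g)⁆ : g)⁆ : g)
      = - (Ph ⁅(Pm ⁅(x : g), (u₂ : g)⁆ : g), (u₁ : g)⁆ : g) := by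
    rw [← lie_skew, map_neg, Submodule.coe_neg]
  -- Jacobi identity in `g`
  have J : ⁅⁅(x : g), (u₁ : g)⁆, (u₂ : g)⁆
      = ⁅⁅(x : g), (u₂ : g)⁆, (u₁ : g)⁆ + ⁅(x : g), ⁅(u₁ : g), (u₂ : g)⁆⁆ := by
    rw [leibniz_lie, ← lie_skew (u₁ : g)]
    abel
  -- Jacobi identity under `Ph`
  have jac : (Ph ⁅⁅(x : g), (u₁ : g)⁆, (u₂ : g)⁆ : g)
      = (Ph ⁅⁅(x : g), (u₂ : g)⁆, (u₁ : g)⁆ : g)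
        + (Ph ⁅(x : g), ⁅(u₁ : g), (u₂ : g)⁆⁆ : g) := by
    rw [J, map_add, Submodule.coe_add]
  rw [e1, e2, e3, e4, jac]
  abel
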